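/- In the network on nodes {s, v1, v2, v3, t} with arcs (s,v1), (s,v2), (v1,v2), (v2,v3), (v2,t), (v3,t), all having capacity 1, transit time 1, and cost 1, and with time horizon T = 6, consider the static flow sending one unit over every arc. The path decomposition y with y(s,v1,v2,v3,t) = 1 and y(s,v2,t) = 1 induces a temporally repeated flow of value 6 with peak cost 4, while the path decomposition y' with y'(s,v1,v2,t) = 1 and y'(s,v2,v3,t) = 1 induces a temporally repeated flow of value 6 with peak cost 6. In particular, the peak cost of a temporally repeated flow depends not only on the underlying static flow but also on the chosen path decomposition. -/

import Mathlib

open MeasureTheory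

/-- A network over time: a digraph with arc capacities `u`, costs `c`,
transit times `τ`, a source `s` and a sink `t`. -/
structure Network (V : Type) (A : Type) where
  tail : A → V
  head : A → V
  u : A → ℕ
  c : A → ℕ
  τ : A → ℕ
  s : V
  t : V

namespace Network

variable {V A : Type}

/-- The node sequence visited by a list of arcs. -/
def nodes (N : Network V A) : List A → List V
  | [] => []
  | a :: rest => N.tail a :: ((a :: rest).map N.head)

/-- `p` is a simple `s`-`t` path (a non-empty list of consecutive arcs starting at
the source, ending at the sink and visiting pairwise distinct nodes). -/
def IsSTPath (N : Network V A) (p : List A) : Prop :=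
  p ≠ [] ∧ List.Chain' (fun a b => N.head a = N.tail b) p ∧
    (∀ a ∈ p.head?, N.tail a = N.s) ∧ (∀ a ∈ p.getLast?, N.head a = N.t) ∧
    (N.nodes p).Nodup

/-- `p` is a non-empty closed walk, i.e. a cycle. -/
def IsCycle (N : Network V A) (p : List A) : Prop :=
  p ≠ [] ∧ List.Chain' (fun a b => N.head a = N.tail b) p ∧
    ∀ a ∈ p.head?, ∀ b ∈ p.getLast?, N.head b = N.tail a

/-- The network contains no directed cycle. -/
def Acyclic (N : Network V A) : Prop := ∀ p : List A, ¬ N.IsCycle p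

/-- Transit time (length) of a path. -/
def pathTime (N : Network V A) (p : List A) : ℕ := (p.map N.τ).sum

/-- Bottleneck capacity of a path. -/
noncomputable def bottleneck (N : Network V A) (p : List A) : ℕ :=
  sInf (N.u '' {a | a ∈ p})

section
variable [DecidableEq A]

/-- Transit time of the part of `p` strictly before arc `a`. -/
def prefixTime (N : Network V A) (p : List A) (a : A) : ℕ :=
  ((p.takeWhile fun b => b ≠ a).map N.τ).sum

/-- Transit time of the part of `p` from arc `a` onwards. -/
def suffixTime (N : Network V A) (p : List A) (a : A) : ℕ :=
  ((p.dropWhile fun b => b ≠ a).map N.τ).sum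

/-- Inflow rate into arc `a` at time `θ` of the temporally repeated flow with
horizon `T` induced by the path decomposition `y`. -/
noncomputable def trRate (N : Network V A) (y : List A → ℝ) (T : ℝ) (a : A) (θ : ℝ) : ℝ :=
  ∑ᶠ p ∈ {p : List A | N.IsSTPath p ∧ (N.pathTime p : ℝ) ≤ T ∧ a ∈ p ∧
    (N.prefixTime p a : ℝ) ≤ θ ∧ (N.suffixTime p a : ℝ) < T - θ}, y p

/-- Static flow on arc `a` induced by the path decomposition `y`. -/
noncomputable def staticOf (N : Network V A) (y : List A → ℝ) (a : A) : ℝ :=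
  ∑ᶠ p ∈ {p : List A | a ∈ p}, y p

/-- `y` is a feasible (capacity-respecting) path decomposition of a static flow. -/
def IsDecomposition (N : Network V A) (y : List A → ℝ) : Prop :=
  (∀ p, 0 ≤ y p) ∧ (∀ p, y p ≠ 0 → N.IsSTPath p) ∧
    (Function.support y).Finite ∧ ∀ a : A, N.staticOf y a ≤ N.u a

/-- Value of the temporally repeated flow induced by `y` with horizon `T`. -/
noncomputable def trValue (N : Network V A) (y : List A → ℝ) (T : ℝ) : ℝ :=
  ∑ᶠ p ∈ {p : List A | N.IsSTPath p ∧ (N.pathTime p : ℝ) ≤ T}, y p * (T - N.pathTime p)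

/-- Amount of flow of the TR flow induced by `y` that has reached the sink by time `θ`. -/
noncomputable def arrTR (N : Network V A) (y : List A → ℝ) (θ : ℝ) : ℝ :=
  ∑ᶠ p ∈ {p : List A | N.IsSTPath p ∧ (N.pathTime p : ℝ) ≤ θ}, y p * (θ - N.pathTime p)

end

/-- All flow rates of the decomposition are (nonnegative) integers. -/
def IsIntegral (y : List A → ℝ) : Prop := ∀ p, ∃ n : ℕ, y p = n

section
variable [Fintype A]

/-- Cost of a flow over time `f` at time point `θ`. -/
noncomputable def costAt (N : Network V A) (f : A → ℝ → ℝ) (θ : ℝ) : ℝ :=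
  ∑ a : A, (N.c a : ℝ) * ∫ ξ in (θ - (N.τ a : ℝ))..θ, f a ξ

/-- Peak cost of a flow over time `f` with horizon `T`. -/
noncomputable def peakCost (N : Network V A) (f : A → ℝ → ℝ) (T : ℝ) : ℝ :=
  sSup (N.costAt f '' Set.Ico 0 T)

/-- Peak cost of the TR flow induced by the decomposition `y`. -/
noncomputable def trPeakCost [DecidableEq A] (N : Network V A) (y : List A → ℝ) (T : ℝ) : ℝ :=
  N.peakCost (N.trRate y T) T

variable [DecidableEq V]

/-- Cumulative flow having entered node `v` by time `θ`. -/
noncomputable def inflowBy (N : Network V A) (f : A → ℝ → ℝ) (v : V) (θ : ℝ) : ℝ :=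
  ∑ a ∈ Finset.univ.filter (fun a => N.head a = v), ∫ ξ in (0:ℝ)..(θ - (N.τ a : ℝ)), f a ξ

/-- Cumulative flow having left node `v` by time `θ`. -/
noncomputable def outflowBy (N : Network V A) (f : A → ℝ → ℝ) (v : V) (θ : ℝ) : ℝ :=
  ∑ a ∈ Finset.univ.filter (fun a => N.tail a = v), ∫ ξ in (0:ℝ)..θ, f a ξ

/-- A feasible flow over time with horizon `T`. -/
def IsFlowOverTime (N : Network V A) (T : ℝ) (f : A → ℝ → ℝ) : Prop :=
  (∀ a, Measurable (f a)) ∧ (∀ a θ, 0 ≤ f a θ) ∧ (∀ a θ, f a θ ≤ N.u a) ∧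
    (∀ a θ, T - (N.τ a : ℝ) < θ → f a θ = 0) ∧ (∀ a θ, θ < 0 → f a θ = 0) ∧
    ∀ v, v ≠ N.s → v ≠ N.t → ∀ θ ∈ Set.Ico (0:ℝ) T,
      N.outflowBy f v θ ≤ N.inflowBy f v θ

/-- Value of a flow over time with horizon `T`. -/
noncomputable def fotValue (N : Network V A) (T : ℝ) (f : A → ℝ → ℝ) : ℝ :=
  N.outflowBy f N.s T - N.inflowBy f N.s T

/-- Amount of flow of a flow over time arrived at the sink by time `θ`. -/
noncomputable def arrivedBy (N : Network V A) (f : A → ℝ → ℝ) (θ : ℝ) : ℝ :=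
  N.inflowBy f N.t θ - N.outflowBy f N.t θ

/-- Feasibility of a static `s`-`t` flow. -/
def IsStaticFlow (N : Network V A) (x : A → ℝ) : Prop :=
  (∀ a, 0 ≤ x a) ∧ (∀ a, x a ≤ N.u a) ∧
    ∀ v, v ≠ N.s → v ≠ N.t →
      ∑ a ∈ Finset.univ.filter (fun a => N.head a = v), x a =
      ∑ a ∈ Finset.univ.filter (fun a => N.tail a = v), x a

/-- Value of a static `s`-`t` flow. -/
noncomputable def staticValue (N : Network V A) (x : A → ℝ) : ℝ :=
  ∑ a ∈ Finset.univ.filter (fun a => N.tail a = N.s), x a -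
  ∑ a ∈ Finset.univ.filter (fun a => N.head a = N.s), x a

end

end Network

open Network

/-- The network of Remark 2.9: nodes `s = 0, v₁ = 1, v₂ = 2, v₃ = 3, t = 4`, arcs
`a₀=(s,v₁), a₁=(s,v₂), a₂=(v₁,v₂), a₃=(v₂,v₃), a₄=(v₂,t), a₅=(v₃,t)`,
all with capacity, transit time and cost equal to `1`. -/
def N₀ : Network (Fin 5) (Fin 6) where
  tail := ![0, 0, 1, 2, 2, 3]
  head := ![1, 2, 2, 3, 4, 4]
  u := fun _ => 1
  c := fun _ => 1
  τ := fun _ => 1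
  s := 0
  t := 4

/-- The path `(s, v₁, v₂, v₃, t)`. -/
def pA : List (Fin 6) := [0, 2, 3, 5]
/-- The path `(s, v₂, t)`. -/
def pB : List (Fin 6) := [1, 4]
/-- The path `(s, v₁, v₂, t)`. -/
def pC : List (Fin 6) := [0, 2, 4]
/-- The path `(s, v₂, v₃, t)`. -/
def pD : List (Fin 6) := [1, 3, 5]

/-- First path decomposition: one unit on `(s,v₁,v₂,v₃,t)` and one on `(s,v₂,t)`. -/
noncomputable def y₀ : List (Fin 6) → ℝ := fun p => if p = pA ∨ p = pB then 1 else 0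

/-- Second path decomposition: one unit on `(s,v₁,v₂,t)` and one on `(s,v₂,v₃,t)`. -/
noncomputable def y₀' : List (Fin 6) → ℝ := fun p => if p = pC ∨ p = pD then 1 else 0

open Set MeasureTheory

theorem finsum_pair' {α : Type*} [DecidableEq α] (f : α → ℝ) (p q : α) (h : p ≠ q)
    (hf : ∀ x, x ≠ p → x ≠ q → f x = 0) (S : Set α) :
    ∑ᶠ x ∈ S, f x = S.indicator f p + S.indicator f q := by
  rw [finsum_mem_def, finsum_eq_finset_sum_of_support_subset _ (s := {p, q})]
  · rw [Finset.sum_pair h]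
  · intro x hx
    rw [Function.mem_support] at hx
    by_contra hmem
    simp only [Finset.coe_insert, Finset.coe_singleton, Set.mem_insert_iff,
      Set.mem_singleton_iff, not_or] at hmem
    exact hx (by simp [Set.indicator_apply, hf x hmem.1 hmem.2])

theorem integ_ind (a b l r : ℝ) (hab : a ≤ b) :
    ∫ x in a..b, (Set.Ico l r).indicator (fun _ => (1:ℝ)) x = max (min b r - max a l) 0 := by
  rw [intervalIntegral.integral_of_le hab, MeasureTheory.setIntegral_indicator measurableSet_Ico,
    setIntegral_const,
    measureReal_congr ((ae_eq_refl (Set.Ioc a b)).inter (MeasureTheory.Ico_ae_eq_Ioc (a := l) (b := r)))]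
  rw [Set.Ioc_inter_Ioc, Real.volume_real_Ioc, smul_eq_mul, mul_one]

lemma hs_pA : N₀.IsSTPath pA :=
  ⟨by decide, by simp [pA, N₀, List.Chain', List.isChain_cons_cons] <;> decide, by decide, by decide, by decide⟩
lemma hs_pB : N₀.IsSTPath pB :=
  ⟨by decide, by simp [pB, N₀, List.Chain', List.isChain_cons_cons] <;> decide, by decide, by decide, by decide⟩
lemma hs_pC : N₀.IsSTPath pC :=
  ⟨by decide, by simp [pC, N₀, List.Chain', List.isChain_cons_cons] <;> decide, by decide, by decide, by decide⟩
lemma hs_pD : N₀.IsSTPath pD :=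
  ⟨by decide, by simp [pD, N₀, List.Chain', List.isChain_cons_cons] <;> decide, by decide, by decide, by decide⟩

/-- The window-overlap function. -/
noncomputable def gg (l r θ : ℝ) : ℝ := max (min θ r - max (θ - 1) l) 0

lemma gg_le_one (l r θ : ℝ) : gg l r θ ≤ 1 := by
  refine max_le ?_ zero_le_one
  have h1 : min θ r ≤ θ := min_le_left _ _
  have h2 : θ - 1 ≤ max (θ - 1) l := le_max_left _ _
  linarith

lemma gg_add (l m r θ : ℝ) (h1 : l ≤ m) (h2 : m ≤ r) :
    gg l m θ + gg m r θ = gg l r θ := by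
  simp only [gg, max_def, min_def]
  split_ifs <;> linarith

lemma indic_mem (y : List (Fin 6) → ℝ) (T θ : ℝ) (a : Fin 6) (p : List (Fin 6))
    (hp : N₀.IsSTPath p) (ha : a ∈ p) (ht : (N₀.pathTime p : ℝ) ≤ T) :
    ({q : List (Fin 6) | N₀.IsSTPath q ∧ (N₀.pathTime q : ℝ) ≤ T ∧ a ∈ q ∧
        (N₀.prefixTime q a : ℝ) ≤ θ ∧ (N₀.suffixTime q a : ℝ) < T - θ}).indicator y p
      = if ((N₀.prefixTime p a : ℝ) ≤ θ ∧ θ < T - (N₀.suffixTime p a : ℝ)) then y p else 0 := by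
  classical
  rw [Set.indicator_apply]
  refine if_congr ?_ rfl rfl
  simp only [Set.mem_setOf_eq, hp, ht, ha, true_and]
  rw [lt_sub_comm]

lemma indic_nomem (y : List (Fin 6) → ℝ) (T θ : ℝ) (a : Fin 6) (p : List (Fin 6))
    (ha : a ∉ p) :
    ({q : List (Fin 6) | N₀.IsSTPath q ∧ (N₀.pathTime q : ℝ) ≤ T ∧ a ∈ q ∧
        (N₀.prefixTime q a : ℝ) ≤ θ ∧ (N₀.suffixTime q a : ℝ) < T - θ}).indicator y p = 0 := by
  classical
  rw [Set.indicator_apply, if_neg]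
  simp only [Set.mem_setOf_eq]
  tauto

lemma hy₀pA : y₀ pA = 1 := by simp [y₀]
lemma hy₀pB : y₀ pB = 1 := by simp [y₀]
lemma hy₀'pC : y₀' pC = 1 := by simp [y₀']
lemma hy₀'pD : y₀' pD = 1 := by simp [y₀']
lemma hy₀ne : ∀ x, x ≠ pA → x ≠ pB → y₀ x = 0 := fun x h1 h2 => by simp [y₀, h1, h2]
lemma hy₀'ne : ∀ x, x ≠ pC → x ≠ pD → y₀' x = 0 := fun x h1 h2 => by simp [y₀', h1, h2]
lemma htA : (N₀.pathTime pA : ℝ) ≤ 6 := by norm_num [show N₀.pathTime pA = 4 from by decide]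
lemma htB : (N₀.pathTime pB : ℝ) ≤ 6 := by norm_num [show N₀.pathTime pB = 2 from by decide]
lemma htC : (N₀.pathTime pC : ℝ) ≤ 6 := by norm_num [show N₀.pathTime pC = 3 from by decide]
lemma htD : (N₀.pathTime pD : ℝ) ≤ 6 := by norm_num [show N₀.pathTime pD = 3 from by decide]

lemma rateA_0 (θ : ℝ) : N₀.trRate y₀ 6 0 θ = (Set.Ico (0:ℝ) 2).indicator (fun _ => (1:ℝ)) θ := by
  rw [Network.trRate, finsum_pair' _ pA pB (by decide) hy₀ne, indic_mem _ _ _ _ _ hs_pA (by decide) htA, indic_nomem _ _ _ _ _ (by decide)]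
  norm_num [show N₀.prefixTime pA 0 = 0 from by decide,
    show N₀.suffixTime pA 0 = 4 from by decide, hy₀pA, Set.indicator_apply, Set.mem_Ico]

lemma rateA_1 (θ : ℝ) : N₀.trRate y₀ 6 1 θ = (Set.Ico (0:ℝ) 4).indicator (fun _ => (1:ℝ)) θ := by
  rw [Network.trRate, finsum_pair' _ pA pB (by decide) hy₀ne, indic_nomem _ _ _ _ _ (by decide), indic_mem _ _ _ _ _ hs_pB (by decide) htB]
  norm_num [show N₀.prefixTime pB 1 = 0 from by decide,
    show N₀.suffixTime pB 1 = 2 from by decide, hy₀pB, Set.indicator_apply, Set.mem_Ico]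

lemma rateA_2 (θ : ℝ) : N₀.trRate y₀ 6 2 θ = (Set.Ico (1:ℝ) 3).indicator (fun _ => (1:ℝ)) θ := by
  rw [Network.trRate, finsum_pair' _ pA pB (by decide) hy₀ne, indic_mem _ _ _ _ _ hs_pA (by decide) htA, indic_nomem _ _ _ _ _ (by decide)]
  norm_num [show N₀.prefixTime pA 2 = 1 from by decide,
    show N₀.suffixTime pA 2 = 3 from by decide, hy₀pA, Set.indicator_apply, Set.mem_Ico]

lemma rateA_3 (θ : ℝ) : N₀.trRate y₀ 6 3 θ = (Set.Ico (2:ℝ) 4).indicator (fun _ => (1:ℝ)) θ := by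
  rw [Network.trRate, finsum_pair' _ pA pB (by decide) hy₀ne, indic_mem _ _ _ _ _ hs_pA (by decide) htA, indic_nomem _ _ _ _ _ (by decide)]
  norm_num [show N₀.prefixTime pA 3 = 2 from by decide,
    show N₀.suffixTime pA 3 = 2 from by decide, hy₀pA, Set.indicator_apply, Set.mem_Ico]

lemma rateA_4 (θ : ℝ) : N₀.trRate y₀ 6 4 θ = (Set.Ico (1:ℝ) 5).indicator (fun _ => (1:ℝ)) θ := by
  rw [Network.trRate, finsum_pair' _ pA pB (by decide) hy₀ne, indic_nomem _ _ _ _ _ (by decide), indic_mem _ _ _ _ _ hs_pB (by decide) htB]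
  norm_num [show N₀.prefixTime pB 4 = 1 from by decide,
    show N₀.suffixTime pB 4 = 1 from by decide, hy₀pB, Set.indicator_apply, Set.mem_Ico]

lemma rateA_5 (θ : ℝ) : N₀.trRate y₀ 6 5 θ = (Set.Ico (3:ℝ) 5).indicator (fun _ => (1:ℝ)) θ := by
  rw [Network.trRate, finsum_pair' _ pA pB (by decide) hy₀ne, indic_mem _ _ _ _ _ hs_pA (by decide) htA, indic_nomem _ _ _ _ _ (by decide)]
  norm_num [show N₀.prefixTime pA 5 = 3 from by decide,
    show N₀.suffixTime pA 5 = 1 from by decide, hy₀pA, Set.indicator_apply, Set.mem_Ico]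

lemma rateB_0 (θ : ℝ) : N₀.trRate y₀' 6 0 θ = (Set.Ico (0:ℝ) 3).indicator (fun _ => (1:ℝ)) θ := by
  rw [Network.trRate, finsum_pair' _ pC pD (by decide) hy₀'ne, indic_mem _ _ _ _ _ hs_pC (by decide) htC, indic_nomem _ _ _ _ _ (by decide)]
  norm_num [show N₀.prefixTime pC 0 = 0 from by decide,
    show N₀.suffixTime pC 0 = 3 from by decide, hy₀'pC, Set.indicator_apply, Set.mem_Ico]

lemma rateB_1 (θ : ℝ) : N₀.trRate y₀' 6 1 θ = (Set.Ico (0:ℝ) 3).indicator (fun _ => (1:ℝ)) θ := by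
  rw [Network.trRate, finsum_pair' _ pC pD (by decide) hy₀'ne, indic_nomem _ _ _ _ _ (by decide), indic_mem _ _ _ _ _ hs_pD (by decide) htD]
  norm_num [show N₀.prefixTime pD 1 = 0 from by decide,
    show N₀.suffixTime pD 1 = 3 from by decide, hy₀'pD, Set.indicator_apply, Set.mem_Ico]

lemma rateB_2 (θ : ℝ) : N₀.trRate y₀' 6 2 θ = (Set.Ico (1:ℝ) 4).indicator (fun _ => (1:ℝ)) θ := by
  rw [Network.trRate, finsum_pair' _ pC pD (by decide) hy₀'ne, indic_mem _ _ _ _ _ hs_pC (by decide) htC, indic_nomem _ _ _ _ _ (by decide)]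
  norm_num [show N₀.prefixTime pC 2 = 1 from by decide,
    show N₀.suffixTime pC 2 = 2 from by decide, hy₀'pC, Set.indicator_apply, Set.mem_Ico]

lemma rateB_3 (θ : ℝ) : N₀.trRate y₀' 6 3 θ = (Set.Ico (1:ℝ) 4).indicator (fun _ => (1:ℝ)) θ := by
  rw [Network.trRate, finsum_pair' _ pC pD (by decide) hy₀'ne, indic_nomem _ _ _ _ _ (by decide), indic_mem _ _ _ _ _ hs_pD (by decide) htD]
  norm_num [show N₀.prefixTime pD 3 = 1 from by decide,
    show N₀.suffixTime pD 3 = 2 from by decide, hy₀'pD, Set.indicator_apply, Set.mem_Ico]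

lemma rateB_4 (θ : ℝ) : N₀.trRate y₀' 6 4 θ = (Set.Ico (2:ℝ) 5).indicator (fun _ => (1:ℝ)) θ := by
  rw [Network.trRate, finsum_pair' _ pC pD (by decide) hy₀'ne, indic_mem _ _ _ _ _ hs_pC (by decide) htC, indic_nomem _ _ _ _ _ (by decide)]
  norm_num [show N₀.prefixTime pC 4 = 2 from by decide,
    show N₀.suffixTime pC 4 = 1 from by decide, hy₀'pC, Set.indicator_apply, Set.mem_Ico]

lemma rateB_5 (θ : ℝ) : N₀.trRate y₀' 6 5 θ = (Set.Ico (2:ℝ) 5).indicator (fun _ => (1:ℝ)) θ := by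
  rw [Network.trRate, finsum_pair' _ pC pD (by decide) hy₀'ne, indic_nomem _ _ _ _ _ (by decide), indic_mem _ _ _ _ _ hs_pD (by decide) htD]
  norm_num [show N₀.prefixTime pD 5 = 2 from by decide,
    show N₀.suffixTime pD 5 = 1 from by decide, hy₀'pD, Set.indicator_apply, Set.mem_Ico]

lemma cost0 (θ : ℝ) :
    N₀.costAt (N₀.trRate y₀ 6) θ =
      gg 0 2 θ + gg 0 4 θ + gg 1 3 θ + gg 2 4 θ + gg 1 5 θ + gg 3 5 θ := by
  rw [Network.costAt, Fin.sum_univ_six]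
  simp only [rateA_0, rateA_1, rateA_2, rateA_3, rateA_4, rateA_5]
  norm_num [N₀, integ_ind _ _ _ _ (by linarith : θ - 1 ≤ θ), gg]

lemma cost0' (θ : ℝ) :
    N₀.costAt (N₀.trRate y₀' 6) θ =
      gg 0 3 θ + gg 0 3 θ + gg 1 4 θ + gg 1 4 θ + gg 2 5 θ + gg 2 5 θ := by
  rw [Network.costAt, Fin.sum_univ_six]
  simp only [rateB_0, rateB_1, rateB_2, rateB_3, rateB_4, rateB_5]
  norm_num [N₀, integ_ind _ _ _ _ (by linarith : θ - 1 ≤ θ), gg]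

example : True := trivial

lemma peakA : N₀.trPeakCost y₀ 6 = 4 := by
  rw [Network.trPeakCost, Network.peakCost]
  apply IsGreatest.csSup_eq
  constructor
  · exact ⟨3, by norm_num, by rw [cost0]; norm_num [gg, min_def, max_def]⟩
  · rintro x ⟨θ, hθ, rfl⟩
    rw [cost0]
    have e1 := gg_add 0 2 4 θ (by norm_num) (by norm_num)
    have e2 := gg_add 1 3 5 θ (by norm_num) (by norm_num)
    have h1 := gg_le_one 0 4 θ
    have h2 := gg_le_one 1 5 θ
    linarith

lemma peakB : N₀.trPeakCost y₀' 6 = 6 := by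
  rw [Network.trPeakCost, Network.peakCost]
  apply IsGreatest.csSup_eq
  constructor
  · exact ⟨3, by norm_num, by rw [cost0']; norm_num [gg, min_def, max_def]⟩
  · rintro x ⟨θ, hθ, rfl⟩
    rw [cost0']
    have h1 := gg_le_one 0 3 θ
    have h2 := gg_le_one 1 4 θ
    have h3 := gg_le_one 2 5 θ
    linarith

lemma valA : N₀.trValue y₀ 6 = 6 := by
  rw [Network.trValue, finsum_pair' _ pA pB (by decide) (fun x h1 h2 => by rw [hy₀ne x h1 h2, zero_mul])]
  norm_num [Set.indicator_apply, Set.mem_setOf_eq, hs_pA, hs_pB, htA, htB, hy₀pA, hy₀pB,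
    show N₀.pathTime pA = 4 from by decide, show N₀.pathTime pB = 2 from by decide]

lemma valB : N₀.trValue y₀' 6 = 6 := by
  rw [Network.trValue, finsum_pair' _ pC pD (by decide) (fun x h1 h2 => by rw [hy₀'ne x h1 h2, zero_mul])]
  norm_num [Set.indicator_apply, Set.mem_setOf_eq, hs_pC, hs_pD, htC, htD, hy₀'pC, hy₀'pD,
    show N₀.pathTime pC = 3 from by decide, show N₀.pathTime pD = 3 from by decide]

lemma statA (a : Fin 6) : N₀.staticOf y₀ a = 1 := by
  rw [Network.staticOf, finsum_pair' _ pA pB (by decide) hy₀ne]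
  have h : ∀ a : Fin 6, (a ∈ pA ∧ a ∉ pB) ∨ (a ∉ pA ∧ a ∈ pB) := by decide
  rcases h a with ⟨h1, h2⟩ | ⟨h1, h2⟩ <;>
    simp [Set.indicator_apply, Set.mem_setOf_eq, h1, h2, hy₀pA, hy₀pB]

lemma statB (a : Fin 6) : N₀.staticOf y₀' a = 1 := by
  rw [Network.staticOf, finsum_pair' _ pC pD (by decide) hy₀'ne]
  have h : ∀ a : Fin 6, (a ∈ pC ∧ a ∉ pD) ∨ (a ∉ pC ∧ a ∈ pD) := by decide
  rcases h a with ⟨h1, h2⟩ | ⟨h1, h2⟩ <;>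
    simp [Set.indicator_apply, Set.mem_setOf_eq, h1, h2, hy₀'pC, hy₀'pD]

lemma decA : N₀.IsDecomposition y₀ := by
  refine ⟨fun p => by unfold y₀; split <;> norm_num, fun p hp => ?_, ?_, fun a => ?_⟩
  · by_cases h : p = pA ∨ p = pB
    · rcases h with rfl | rfl
      exacts [hs_pA, hs_pB]
    · push_neg at h
      exact absurd (hy₀ne p h.1 h.2) hp
  · refine Set.Finite.subset ((Set.finite_singleton pB).insert pA) fun x hx => ?_
    rw [Function.mem_support] at hx
    by_contra h
    simp only [Set.mem_insert_iff, Set.mem_singleton_iff, not_or] at h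
    exact hx (hy₀ne x h.1 h.2)
  · rw [statA]
    norm_num [N₀]

lemma decB : N₀.IsDecomposition y₀' := by
  refine ⟨fun p => by unfold y₀'; split <;> norm_num, fun p hp => ?_, ?_, fun a => ?_⟩
  · by_cases h : p = pC ∨ p = pD
    · rcases h with rfl | rfl
      exacts [hs_pC, hs_pD]
    · push_neg at h
      exact absurd (hy₀'ne p h.1 h.2) hp
  · refine Set.Finite.subset ((Set.finite_singleton pD).insert pC) fun x hx => ?_
    rw [Function.mem_support] at hx
    by_contra h
    simp only [Set.mem_insert_iff, Set.mem_singleton_iff, not_or] at h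
    exact hx (hy₀'ne x h.1 h.2)
  · rw [statB]
    norm_num [N₀]

/-- both decompositions decompose the static flow sending one unit over
every arc; with time horizon `T = 6` the first induces a TR flow of value `6` with
peak cost `4`, the second a TR flow of value `6` with peak cost `6`.  In particular,
the peak cost of a TR flow depends on the chosen path decomposition, not only on the
underlying static flow. -/
theorem stmt0 :
    N₀.IsDecomposition y₀ ∧ N₀.IsDecomposition y₀' ∧
    (∀ a, N₀.staticOf y₀ a = 1) ∧ (∀ a, N₀.staticOf y₀' a = 1) ∧
    N₀.trValue y₀ 6 = 6 ∧ N₀.trPeakCost y₀ 6 = 4 ∧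
    N₀.trValue y₀' 6 = 6 ∧ N₀.trPeakCost y₀' 6 = 6 ∧
    N₀.trPeakCost y₀ 6 ≠ N₀.trPeakCost y₀' 6 :=
  ⟨decA, decB, statA, statB, valA, peakA, valB, peakB, by rw [peakA, peakB]; norm_num⟩
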